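/- Let z : Fin 5 → ℂ have all coordinates nonzero and pairwise distinct norms (|z i| ≠ |z j| for i ≠ j). Let σ be a permutation of Fin 5 and ζ : Fin 5 → ℂ with (ζ i)⁵ = 1 for all i, and set w := (fun i => ζ i * z (σ i)). Suppose τ₁ and τ₂ are permutations of Fin 5 such that i < j implies |z (τ₁ j)| < |z (τ₁ i)| and |w (τ₂ j)| < |w (τ₂ i)| (τ₁ sorts z and τ₂ sorts w in strictly descending norm order). Then, with f(v) := |v| · exp(I · (arg(v) mod 2π/5)) (where θ mod 2π/5 := θ − (2π/5)⌊θ/(2π/5)⌋), one has f(w (τ₂ k)) = f(z (τ₁ k)) for every k ∈ Fin 5. That is, the composite canonicalization h_RootSc ∘ h_perm applied to any (S₅ ⋉ ℤ₅⁵)-transform of z yields the same output as applied to z itself. -/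

import Mathlib

/-- `θ mod (2π/5) = θ − (2π/5)·⌊θ/(2π/5)⌋`. -/
noncomputable def modAngle (θ : ℝ) : ℝ := θ - (2 * Real.pi / 5) * (⌊θ / (2 * Real.pi / 5)⌋ : ℝ)

/-- The root-scaling canonicalization `f v = |v| · exp(I·(arg v mod 2π/5))`. -/
noncomputable def rootScCanon (v : ℂ) : ℂ :=
  (‖v‖ : ℂ) * Complex.exp (Complex.I * (modAngle (Complex.arg v) : ℂ))

lemma modAngle_add_int (θ : ℝ) (m : ℤ) :
    modAngle (θ + (2 * Real.pi / 5) * m) = modAngle θ := by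
  unfold modAngle
  have hc : (2 * Real.pi / 5) ≠ 0 := by positivity
  have h1 : (θ + (2 * Real.pi / 5) * m) / (2 * Real.pi / 5) = θ / (2 * Real.pi / 5) + m := by
    field_simp
  rw [h1, Int.floor_add_intCast]
  push_cast
  ring

lemma abs_of_root5 {u : ℂ} (hu : u ^ 5 = 1) : ‖u‖ = 1 := by
  have h : (‖u‖) ^ 5 = 1 := by
    rw [← norm_pow, hu, norm_one]
  nlinarith [norm_nonneg u, sq_nonneg (‖u‖ - 1), sq_nonneg (‖u‖ + 1),
    sq_nonneg ((‖u‖) ^ 2 - 1), sq_nonneg ((‖u‖) ^ 2 + 1)]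

lemma arg_of_root5 {u : ℂ} (hu : u ^ 5 = 1) :
    ∃ m : ℤ, Complex.arg u = (2 * Real.pi / 5) * m := by
  have habs : ‖u‖ = 1 := abs_of_root5 hu
  have hrep : u = Complex.exp (Complex.arg u * Complex.I) := by
    conv_lhs => rw [← Complex.norm_mul_exp_arg_mul_I u]
    rw [habs, Complex.ofReal_one, one_mul]
  have h5 : Complex.exp ((5 : ℂ) * (Complex.arg u * Complex.I)) = 1 := by
    rw [show (5 : ℂ) = ((5 : ℕ) : ℂ) by norm_num, Complex.exp_nat_mul, ← hrep, hu]
  rw [Complex.exp_eq_one_iff] at h5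
  obtain ⟨n, hn⟩ := h5
  refine ⟨n, ?_⟩
  have hI : ((5 * Complex.arg u : ℝ) : ℂ) * Complex.I = ((n * (2 * Real.pi) : ℝ) : ℂ) * Complex.I := by
    push_cast
    linear_combination hn
  have h2 := mul_right_cancel₀ Complex.I_ne_zero hI
  have h3 : (5 : ℝ) * Complex.arg u = n * (2 * Real.pi) := by exact_mod_cast h2
  field_simp
  linarith

lemma rootScCanon_root_mul {u v : ℂ} (hu : u ^ 5 = 1) (hv : v ≠ 0) :
    rootScCanon (u * v) = rootScCanon v := by
  have hune : u ≠ 0 := by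
    intro h; rw [h] at hu; simp at hu
  have habs : ‖u * v‖ = ‖v‖ := by
    rw [norm_mul, abs_of_root5 hu, one_mul]
  obtain ⟨m, hm⟩ := arg_of_root5 hu
  have h1 : (Complex.arg (u * v) : Real.Angle) = ((Complex.arg u + Complex.arg v : ℝ) : Real.Angle) := by
    rw [Complex.arg_mul_coe_angle hune hv, Real.Angle.coe_add]
  obtain ⟨n, hn⟩ := Real.Angle.angle_eq_iff_two_pi_dvd_sub.mp h1
  have harg : Complex.arg (u * v) = Complex.arg v + (2 * Real.pi / 5) * ((m + 5 * n : ℤ) : ℝ) := by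
    push_cast
    have h5 : (2 * Real.pi / 5) * 5 = 2 * Real.pi := by ring
    rw [hm] at hn
    nlinarith [hn]
  unfold rootScCanon
  rw [habs, harg, modAngle_add_int]

lemma sort_unique (F : Fin 5 → ℝ) (hF : Function.Injective F)
    (a b : Equiv.Perm (Fin 5))
    (ha : ∀ i j, i < j → F (a j) < F (a i)) (hb : ∀ i j, i < j → F (b j) < F (b i)) :
    ∀ k, a k = b k := by
  set s : Finset ℝ := Finset.univ.image F with hs
  have hcard : s.card = 5 := by
    rw [hs, Finset.card_image_of_injective _ hF, Finset.card_univ, Fintype.card_fin]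
  have key : ∀ (c : Equiv.Perm (Fin 5)), (∀ i j, i < j → F (c j) < F (c i)) →
      (fun i : Fin 5 => F (c i.rev)) = ⇑(s.orderEmbOfFin hcard) := by
    intro c hc
    apply Finset.orderEmbOfFin_unique hcard
    · intro x; exact Finset.mem_image_of_mem F (Finset.mem_univ _)
    · intro i j hij
      exact hc j.rev i.rev (Fin.rev_lt_rev.mpr hij)
  have h := (key a ha).trans (key b hb).symm
  intro k
  have hk := congrFun h k.rev
  simp only [Fin.rev_rev] at hk
  exact hF hk

/-- The composition `h_RootSc ∘ h_perm` is invariant under the action of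
`S₅ ⋉ ℤ₅⁵` on tuples `z : Fin 5 → ℂ` with nonzero coordinates of pairwise
distinct norms: if `w i = ζ i * z (σ i)` with `(ζ i)⁵ = 1`, and `τ₁`, `τ₂` sort
`z` and `w` respectively in strictly descending norm order, then the
canonicalized outputs agree. -/
theorem rootSc_perm_canonicalization_invariant
    (z : Fin 5 → ℂ) (hz : ∀ i, z i ≠ 0)
    (hnorm : ∀ i j : Fin 5, i ≠ j → ‖z i‖ ≠ ‖z j‖)
    (σ : Equiv.Perm (Fin 5)) (ζ : Fin 5 → ℂ) (hζ : ∀ i, (ζ i) ^ 5 = 1)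
    (τ₁ τ₂ : Equiv.Perm (Fin 5))
    (hτ₁ : ∀ i j : Fin 5, i < j → ‖z (τ₁ j)‖ < ‖z (τ₁ i)‖)
    (hτ₂ : ∀ i j : Fin 5, i < j →
      ‖(fun i => ζ i * z (σ i)) (τ₂ j)‖ <
        ‖(fun i => ζ i * z (σ i)) (τ₂ i)‖) :
    ∀ k : Fin 5, rootScCanon ((fun i => ζ i * z (σ i)) (τ₂ k)) = rootScCanon (z (τ₁ k)) := by
  have hF : Function.Injective (fun i => ‖z i‖) := by
    intro i j h
    by_contra hne
    exact hnorm i j hne h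
  have hw : ∀ i, ‖ζ i * z (σ i)‖ = ‖z (σ i)‖ := fun i => by
    rw [norm_mul, abs_of_root5 (hζ i), one_mul]
  have heq : ∀ k, τ₁ k = (τ₂.trans σ) k := by
    apply sort_unique _ hF τ₁ (τ₂.trans σ) hτ₁
    intro i j hij
    have := hτ₂ i j hij
    simp only at this
    rw [hw, hw] at this
    simpa using this
  intro k
  simp only
  rw [show τ₁ k = σ (τ₂ k) from heq k]
  exact rootScCanon_root_mul (hζ _) (hz _)
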